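/- The Cygan inversion I(ζ, v, u) = (ζ / (-|ζ|² + i v - u), -v / | -|ζ|² + i v - u |², u / | -|ζ|² + i v - u |²) satisfies ρ(I(p), o) = 1 / ρ(p, o) for every p ≠ o in ℂ × ℝ × ℝ≥0, where o = (0, 0, 0). -/

import Mathlib

open Complex

/-- The Cygan metric on `ℂ × ℝ × ℝ` (third coordinate is the height `u ≥ 0`). -/
noncomputable def cygan (p q : ℂ × ℝ × ℝ) : ℝ :=
  Real.sqrt (norm
    ((((norm (p.1 - q.1)) ^ 2 + |p.2.2 - q.2.2| : ℝ) : ℂ)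
      - Complex.I * (p.2.1 : ℂ) + Complex.I * (q.2.1 : ℂ)
      - 2 * Complex.I * (((p.1 * (starRingEnd ℂ) q.1).im : ℝ) : ℂ)))

/-- Heisenberg group multiplication on `ℂ × ℝ`. -/
noncomputable def hmul (p q : ℂ × ℝ) : ℂ × ℝ :=
  (p.1 + q.1, p.2 + q.2 + 2 * ((starRingEnd ℂ) q.1 * p.1).im)

/-- The Korányi gauge on `ℂ × ℝ`. -/
noncomputable def hgauge (p : ℂ × ℝ) : ℝ :=
  Real.sqrt (norm ((-((norm p.1) ^ 2 : ℝ) : ℂ) + Complex.I * (p.2 : ℂ)))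

/-- The Heisenberg (Korányi–Cygan) metric on `ℂ × ℝ`. -/
noncomputable def hdist (p q : ℂ × ℝ) : ℝ :=
  hgauge (hmul (-p.1, -p.2) q)

/-- Heisenberg inversion on `ℂ × ℝ`. -/
noncomputable def hinv (p : ℂ × ℝ) : ℂ × ℝ :=
  ((p.1 / ((-((norm p.1) ^ 2 : ℝ) : ℂ) + Complex.I * (p.2 : ℂ))),
    -p.2 / (norm ((-((norm p.1) ^ 2 : ℝ) : ℂ) + Complex.I * (p.2 : ℂ))) ^ 2)

/-- Cygan inversion on `ℂ × ℝ × ℝ`. -/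
noncomputable def cinv (p : ℂ × ℝ × ℝ) : ℂ × ℝ × ℝ :=
  (p.1 / ((-((norm p.1) ^ 2 : ℝ) : ℂ) + Complex.I * (p.2.1 : ℂ) - (p.2.2 : ℂ)),
    -p.2.1 / (norm ((-((norm p.1) ^ 2 : ℝ) : ℂ) + Complex.I * (p.2.1 : ℂ) - (p.2.2 : ℂ))) ^ 2,
    p.2.2 / (norm ((-((norm p.1) ^ 2 : ℝ) : ℂ) + Complex.I * (p.2.1 : ℂ) - (p.2.2 : ℂ))) ^ 2)

theorem cygan_cinv_zero (p : ℂ × ℝ × ℝ) (hp0 : 0 ≤ p.2.2)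
    (hp : p ≠ (0, 0, 0)) :
    cygan (cinv p) (0, 0, 0) = 1 / cygan p (0, 0, 0) := by
  obtain ⟨ζ, v, u⟩ := p
  simp only [ne_eq, Prod.mk.injEq, not_and_or] at hp
  simp only at hp0
  set w : ℂ := (-((norm ζ) ^ 2 : ℝ) : ℂ) + Complex.I * (v : ℂ) - (u : ℂ) with hwdef
  have hwre : w.re = -((norm ζ) ^ 2) - u := by simp [hwdef]; norm_cast
  have hwim : w.im = v := by simp [hwdef]; norm_cast
  have hw0 : w ≠ 0 := by
    intro h
    have h1 : -((norm ζ) ^ 2) - u = 0 := by rw [← hwre, h]; simp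
    have h2 : v = 0 := by rw [← hwim, h]; simp
    have hz2 : (norm ζ) ^ 2 = 0 ∧ u = 0 := by
      constructor <;> nlinarith [sq_nonneg (norm ζ)]
    have hz : ζ = 0 := by
      have := hz2.1
      simpa using (pow_eq_zero_iff (n := 2) (by norm_num)).mp this
    rcases hp with h | h | h
    · exact h hz
    · exact h h2
    · exact h hz2.2
  have hA : norm w ≠ 0 := norm_ne_zero_iff.mpr hw0
  have hA2 : (norm w) ^ 2 ≠ 0 := pow_ne_zero 2 hA
  -- inner expressions
  have habs_u : |u| = u := abs_of_nonneg hp0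
  have e1 : ((((norm (ζ - 0)) ^ 2 + |u - 0| : ℝ) : ℂ)
      - Complex.I * (v : ℂ) + Complex.I * ((0 : ℝ) : ℂ)
      - 2 * Complex.I * (((ζ * (starRingEnd ℂ) (0 : ℂ)).im : ℝ) : ℂ)) = -w := by
    simp only [sub_zero, map_zero, mul_zero, Complex.zero_im, Complex.ofReal_zero,
      habs_u, hwdef]
    push_cast
    ring
  have e2 : (((((norm (ζ / w - 0)) ^ 2 + |u / (norm w) ^ 2 - 0| : ℝ) : ℂ)
      - Complex.I * ((-v / (norm w) ^ 2 : ℝ) : ℂ) + Complex.I * ((0 : ℝ) : ℂ)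
      - 2 * Complex.I * ((((ζ / w) * (starRingEnd ℂ) (0 : ℂ)).im : ℝ) : ℂ))) = -w⁻¹ := by
    have habsdiv : (norm (ζ / w)) ^ 2 = (norm ζ) ^ 2 / (norm w) ^ 2 := by
      rw [norm_div]; ring
    have habsu2 : |u / (norm w) ^ 2| = u / (norm w) ^ 2 := by
      apply _root_.abs_of_nonneg
      positivity
    have hinv : -w⁻¹ = -(starRingEnd ℂ w) / ((norm w : ℂ) ^ 2) := by
      rw [Complex.inv_def, Complex.normSq_eq_norm_sq]
      push_cast
      ring
    simp only [sub_zero, map_zero, mul_zero, Complex.zero_im, Complex.ofReal_zero,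
      habsdiv, habsu2, hinv]
    have hconj : (starRingEnd ℂ) w = (-((norm ζ) ^ 2 : ℝ) : ℂ) - Complex.I * (v : ℂ) - (u : ℂ) := by
      rw [hwdef]
      simp [map_sub, map_add, Complex.conj_ofReal, Complex.conj_I]
      ring
    rw [hconj]
    push_cast
    field_simp
    ring
  simp only [cygan, cinv, ← hwdef, e1, e2, norm_neg]
  rw [norm_inv, Real.sqrt_inv, one_div]
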